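/- arXiv:1604.06337 — 4 statements merged into one kernel-verified Lean document; each statement's English description precedes it below -/
import Mathlib

section
/- With B_p(z) = ((p−1)/(2π)) ∑_{k∈ℤ} t^p/(2πik+t)^p where t = |log(|z|²)|: for every 0 < a < 1 there exists c > 0 such that sup_{a ≤ |z| < 1} |B_p(z) − (p−1)/(2π)| = O(e^{−cp}) as p → ∞. -/
open Real

lemma aux_absw (t : ℝ) (k : ℤ) :
    ‖2 * Real.pi * Complex.I * (k : ℂ) + (t : ℂ)‖ ^ 2
      = t ^ 2 + (2 * Real.pi * (k : ℝ)) ^ 2 := by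
  rw [Complex.sq_norm, Complex.normSq_apply]
  simp [Complex.add_re, Complex.add_im, Complex.mul_re, Complex.mul_im]
  ring

set_option maxHeartbeats 2000000 in
/-- with B_p(z) = ((p−1)/(2π)) ∑_{k∈ℤ} t^p/(2πik+t)^p, t = |log|z|²|,
for every 0 < a < 1 there are c > 0 and C with
sup_{a ≤ |z| < 1} |B_p(z) − (p−1)/(2π)| ≤ C e^{−cp}. -/
theorem bergman_density_exp_decay (a : ℝ) (ha0 : 0 < a) (ha1 : a < 1) :
    ∃ c > (0 : ℝ), ∃ C : ℝ, ∀ p : ℕ, 2 ≤ p → ∀ z : ℂ,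
      a ≤ ‖z‖ → ‖z‖ < 1 →
      Norm.norm
        ((((p : ℂ) - 1) / (2 * Real.pi))
            * (∑' k : ℤ, ((|Real.log (‖z‖ ^ 2)| : ℝ) : ℂ) ^ p
                / (2 * Real.pi * Complex.I * (k : ℂ)
                    + ((|Real.log (‖z‖ ^ 2)| : ℝ) : ℂ)) ^ p)
          - ((p : ℂ) - 1) / (2 * Real.pi))
        ≤ C * Real.exp (-c * p) := by
  have hπ : (0 : ℝ) < Real.pi := Real.pi_pos
  set T : ℝ := -(2 * Real.log a) with hTdef
  have hT : 0 < T := by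
    have := Real.log_neg ha0 ha1
    simp only [hTdef]; linarith
  set ρ : ℝ := T / Real.sqrt (T ^ 2 + (2 * Real.pi) ^ 2) with hρdef
  have hden : (0 : ℝ) < Real.sqrt (T ^ 2 + (2 * Real.pi) ^ 2) := by
    apply Real.sqrt_pos.mpr; positivity
  have hρ0 : 0 < ρ := div_pos hT hden
  have hρ1 : ρ < 1 := by
    rw [hρdef, div_lt_one hden]
    have h1 : T = Real.sqrt (T ^ 2) := (Real.sqrt_sq hT.le).symm
    rw [h1]
    apply Real.sqrt_lt_sqrt (by positivity)
    nlinarith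
  have hρsq : ρ ^ 2 = T ^ 2 / (T ^ 2 + (2 * Real.pi) ^ 2) := by
    rw [hρdef, div_pow, Real.sq_sqrt (by positivity)]
  set c : ℝ := -Real.log ρ / 2 with hcdef
  have hc : 0 < c := by
    have := Real.log_neg hρ0 hρ1
    simp only [hcdef]; linarith
  have hZs : Summable (fun k : ℤ => 1 / (k : ℝ) ^ 2) :=
    summable_one_div_int_pow.mpr one_lt_two
  set Z : ℝ := ∑' k : ℤ, 1 / (k : ℝ) ^ 2 with hZdef
  have hZ0 : 0 ≤ Z := tsum_nonneg (fun k => by positivity)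
  refine ⟨c, hc, (T / (2 * Real.pi)) ^ 2 * Z / (ρ ^ 2 * c), ?_⟩
  intro p hp z hza hz1
  set t : ℝ := |Real.log (‖z‖ ^ 2)| with htdef
  have hz0 : 0 < ‖z‖ := lt_of_lt_of_le ha0 hza
  have hlogle : Real.log (‖z‖ ^ 2) ≤ 0 := by
    apply Real.log_nonpos (by positivity)
    nlinarith
  have ht0 : 0 < t := by
    rw [htdef, abs_pos]
    intro h
    have := Real.exp_log (show (0:ℝ) < ‖z‖ ^ 2 by positivity)
    rw [h, Real.exp_zero] at this
    nlinarith
  have htT : t ≤ T := by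
    rw [htdef, abs_of_nonpos hlogle, hTdef]
    have h1 : Real.log (‖z‖ ^ 2) = 2 * Real.log (‖z‖) := by
      rw [Real.log_pow]; push_cast; ring
    have h2 : Real.log a ≤ Real.log (‖z‖) := Real.log_le_log ha0 hza
    linarith
  -- the function being summed
  set f : ℤ → ℂ := fun k => (t : ℂ) ^ p
      / (2 * Real.pi * Complex.I * (k : ℂ) + (t : ℂ)) ^ p with hfdef
  set w : ℤ → ℂ := fun k => 2 * Real.pi * Complex.I * (k : ℂ) + (t : ℂ) with hwdef
  have habsw : ∀ k : ℤ, ‖w k‖ ^ 2 = t ^ 2 + (2 * Real.pi * (k : ℝ)) ^ 2 :=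
    fun k => aux_absw t k
  have hw0 : ∀ k : ℤ, 0 < ‖w k‖ := by
    intro k
    have h := habsw k
    nlinarith [norm_nonneg (w k), sq_nonneg (2 * Real.pi * (k : ℝ))]
  have hnormf : ∀ k : ℤ, ‖f k‖ = (t / ‖w k‖) ^ p := by
    intro k
    rw [hfdef]
    simp only [norm_div, norm_pow, Complex.norm_real, Real.norm_eq_abs, abs_of_pos ht0, div_pow]
    rfl
  set q : ℤ → ℝ := fun k => t / ‖w k‖ with hqdef
  have hq0 : ∀ k, 0 ≤ q k := fun k => div_nonneg ht0.le (hw0 k).le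
  have hk2 : ∀ k : ℤ, k ≠ 0 → (1 : ℝ) ≤ (k : ℝ) ^ 2 := by
    intro k hk
    have h1 : (1 : ℤ) ≤ |k| := Int.one_le_abs hk
    have : (1 : ℤ) ≤ k ^ 2 := by nlinarith [sq_abs k]
    exact_mod_cast this
  have hqρ : ∀ k : ℤ, k ≠ 0 → q k ≤ ρ := by
    intro k hk
    have hsq : q k ^ 2 ≤ ρ ^ 2 := by
      have ht2 : t ^ 2 ≤ T ^ 2 := by nlinarith
      have h1 : (2 * Real.pi) ^ 2 ≤ (2 * Real.pi * (k : ℝ)) ^ 2 := by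
        nlinarith [hk2 k hk, sq_nonneg Real.pi]
      rw [hqdef, hρsq, div_pow, habsw k, div_le_div_iff₀ (by nlinarith [hk2 k hk]) (by positivity)]
      nlinarith [mul_le_mul ht2 h1 (by positivity) (sq_nonneg T)]
    exact (pow_le_pow_iff_left₀ (hq0 k) hρ0.le two_ne_zero).mp hsq
  have hqk : ∀ k : ℤ, k ≠ 0 → q k ^ 2 ≤ (T / (2 * Real.pi)) ^ 2 * (1 / (k : ℝ) ^ 2) := by
    intro k hk
    have hk2' := hk2 k hk
    have ht2 : t ^ 2 ≤ T ^ 2 := by nlinarith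
    have hrhs : (T / (2 * Real.pi)) ^ 2 * (1 / (k : ℝ) ^ 2)
        = T ^ 2 / ((2 * Real.pi) ^ 2 * (k : ℝ) ^ 2) := by
      rw [div_pow, div_mul_div_comm, mul_one]
    have hden2 : (0 : ℝ) < (2 * Real.pi) ^ 2 * (k : ℝ) ^ 2 := by
      have := hk2'
      nlinarith [sq_nonneg Real.pi]
    rw [hqdef, hrhs, div_pow, habsw k, div_le_div_iff₀ (by nlinarith [sq_nonneg (2 * Real.pi * (k:ℝ))]) hden2]
    nlinarith [mul_le_mul_of_nonneg_right ht2 (sq_nonneg (2 * Real.pi * (k : ℝ))),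
      sq_nonneg (T * t)]
  -- the dominating summable function
  set g : ℤ → ℝ := fun k => (ρ ^ (p - 2) * (T / (2 * Real.pi)) ^ 2) * (1 / (k : ℝ) ^ 2)
    with hgdef
  have hgs : Summable g := hZs.mul_left _
  have hfg : ∀ k : ℤ, k ≠ 0 → ‖f k‖ ≤ g k := by
    intro k hk
    rw [hnormf k]
    have hsplit : (q k) ^ p = (q k) ^ (p - 2) * (q k) ^ 2 := by
      rw [← pow_add]
      congr 1
      omega
    rw [hsplit, hgdef]
    have h1 : (q k) ^ (p - 2) ≤ ρ ^ (p - 2) := pow_le_pow_left₀ (hq0 k) (hqρ k hk) _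
    have h2 := hqk k hk
    calc q k ^ (p - 2) * q k ^ 2 ≤ ρ ^ (p - 2) * ((T / (2 * Real.pi)) ^ 2 * (1 / (k : ℝ) ^ 2)) := by
          apply mul_le_mul h1 h2 (by positivity) (by positivity)
      _ = ρ ^ (p - 2) * (T / (2 * Real.pi)) ^ 2 * (1 / (k : ℝ) ^ 2) := by ring
  have hfg' : ∀ k : ℤ, k ≠ 0 → ‖f k‖ ≤ g k := by
    intro k hk
    exact hfg k hk
  have hfs : Summable f := by
    apply Summable.of_norm_bounded_eventually (g := g) hgs
    rw [Filter.eventually_cofinite]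
    apply Set.Finite.subset (Set.finite_singleton (0 : ℤ))
    intro k hk
    simp only [Set.mem_setOf_eq, not_le] at hk
    simp only [Set.mem_singleton_iff]
    by_contra hk0
    exact absurd (hfg' k hk0) (not_le.mpr hk)
  -- split off the k = 0 term
  have hf0 : f 0 = 1 := by
    rw [hfdef]
    simp only [Int.cast_zero, mul_zero, zero_add]
    exact div_self (pow_ne_zero _ (Complex.ofReal_ne_zero.mpr ht0.ne'))
  have hsplit := Summable.tsum_eq_add_tsum_ite hfs 0
  rw [hf0] at hsplit
  -- summability of the norms of the tail
  have hg0 : (0:ℝ) ≤ g 0 := by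
    simp only [hgdef]
    positivity
  have hites : Summable (fun k : ℤ => ‖(if k = 0 then (0:ℂ) else f k)‖) := by
    apply Summable.of_nonneg_of_le (fun k => norm_nonneg _) _ hgs
    intro k
    by_cases hk : k = 0
    · subst hk; simpa using hg0
    · simpa [hk] using hfg' k hk
  have htail : ‖∑' k : ℤ, ite (k = 0) 0 (f k)‖
      ≤ (ρ ^ (p - 2) * (T / (2 * Real.pi)) ^ 2) * Z := by
    calc ‖∑' k : ℤ, ite (k = 0) (0:ℂ) (f k)‖
        ≤ ∑' k : ℤ, ‖(if k = 0 then (0:ℂ) else f k)‖ :=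
          norm_tsum_le_tsum_norm hites
      _ ≤ ∑' k : ℤ, g k := by
          apply Summable.tsum_le_tsum _ hites hgs
          intro k
          by_cases hk : k = 0
          · subst hk; simpa using hg0
          · simpa [hk] using hfg' k hk
      _ = (ρ ^ (p - 2) * (T / (2 * Real.pi)) ^ 2) * Z := by
          rw [hgdef, hZdef, tsum_mul_left]
  -- rewrite the main expression
  have hexpr : (((p : ℂ) - 1) / (2 * Real.pi)) * (∑' k : ℤ, f k)
      - ((p : ℂ) - 1) / (2 * Real.pi)
      = (((p : ℂ) - 1) / (2 * Real.pi)) * (∑' k : ℤ, ite (k = 0) 0 (f k)) := by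
    rw [hsplit]; ring
  have hgoal : ‖(((p : ℂ) - 1) / (2 * Real.pi)) * (∑' k : ℤ, f k)
      - ((p : ℂ) - 1) / (2 * Real.pi)‖
      ≤ (p : ℝ) * ((ρ ^ (p - 2) * (T / (2 * Real.pi)) ^ 2) * Z) := by
    rw [hexpr, norm_mul]
    have hA : ‖((p : ℂ) - 1) / (2 * Real.pi)‖ ≤ (p : ℝ) := by
      have h1 : ((p : ℂ) - 1) / (2 * (Real.pi : ℂ)) = (((p : ℝ) - 1) / (2 * Real.pi) : ℝ) := by
        push_cast; ring
      rw [h1, Complex.norm_real, Real.norm_eq_abs]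
      have hp1 : (1 : ℝ) ≤ (p : ℝ) := by exact_mod_cast Nat.one_le_of_lt hp
      rw [abs_of_nonneg (div_nonneg (by linarith) (by positivity))]
      rw [div_le_iff₀ (by positivity)]
      nlinarith [Real.pi_gt_three]
    exact mul_le_mul hA htail (norm_nonneg _) (Nat.cast_nonneg p)
  refine le_trans hgoal ?_
  -- now the purely real estimate
  have hρp : ρ ^ (p - 2) = ρ ^ p / ρ ^ 2 := by
    rw [pow_sub₀ ρ hρ0.ne' hp, div_eq_mul_inv]
  have hρexp : ρ ^ p = Real.exp (-(2 * c) * p) := by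
    have h1 : ρ = Real.exp (Real.log ρ) := (Real.exp_log hρ0).symm
    have h2 : Real.log ρ = -(2 * c) := by rw [hcdef]; ring
    calc ρ ^ p = Real.exp (Real.log ρ) ^ p := by rw [← h1]
      _ = Real.exp (Real.log ρ * p) := by rw [← Real.exp_nat_mul]; ring_nf
      _ = Real.exp (-(2 * c) * p) := by rw [h2]
  have hple : (p : ℝ) ≤ Real.exp (c * p) / c := by
    rw [le_div_iff₀ hc]
    have := Real.add_one_le_exp (c * p)
    linarith
  calc (p : ℝ) * ((ρ ^ (p - 2) * (T / (2 * Real.pi)) ^ 2) * Z)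
      ≤ (Real.exp (c * p) / c) * ((ρ ^ (p - 2) * (T / (2 * Real.pi)) ^ 2) * Z) := by
        apply mul_le_mul_of_nonneg_right hple (by positivity)
    _ = (T / (2 * Real.pi)) ^ 2 * Z / (ρ ^ 2 * c) * (Real.exp (c * p) * Real.exp (-(2 * c) * p)) := by
        rw [hρp, hρexp]
        field_simp
    _ = (T / (2 * Real.pi)) ^ 2 * Z / (ρ ^ 2 * c) * Real.exp (-c * p) := by
        rw [← Real.exp_add]
        congr 1
        ring
end

section
/- For every 0 < a < 1 and 0 < γ < 1/2 there exists c > 0 such that, for B_p as above, sup_{a e^{−p^γ} ≤ |z| < 1} |B_p(z) − (p−1)/(2π)| = O(exp(−c p^{1−2γ})) as p → ∞. -/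
open Real

lemma aux_tsum_bound (t : ℝ) (ht : 0 < t) (p : ℕ) (hp : 2 ≤ p) :
    ‖(∑' k : ℤ, ((t : ℝ) : ℂ) ^ p /
        (2 * Real.pi * Complex.I * (k : ℂ) + ((t : ℝ) : ℂ)) ^ p) - 1‖
      ≤ (t / Real.sqrt (t ^ 2 + 4 * Real.pi ^ 2)) ^ (p - 2) * (t ^ 2 / (4 * Real.pi ^ 2))
          * (∑' k : ℤ, 1 / (k : ℝ) ^ 2) := by
  have hπ := Real.pi_pos
  set q1 := t / Real.sqrt (t ^ 2 + 4 * Real.pi ^ 2) with hq1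
  set f : ℤ → ℂ := fun k => ((t : ℝ) : ℂ) ^ p /
      (2 * Real.pi * Complex.I * (k : ℂ) + ((t : ℝ) : ℂ)) ^ p with hf
  set F : ℤ → ℂ := fun k => if k = 0 then 0 else f k with hF
  set g : ℤ → ℝ := fun k => q1 ^ (p - 2) * (t ^ 2 / (4 * Real.pi ^ 2)) * (1 / (k : ℝ) ^ 2)
    with hg
  have habsw : ∀ k : ℤ, ‖2 * Real.pi * Complex.I * (k : ℂ) + ((t : ℝ) : ℂ)‖
      = Real.sqrt (t ^ 2 + 4 * Real.pi ^ 2 * (k : ℝ) ^ 2) := by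
    intro k
    rw [show (2 * Real.pi * Complex.I * (k : ℂ) + ((t : ℝ) : ℂ))
        = ((t : ℝ) : ℂ) + ((2 * Real.pi * (k : ℝ) : ℝ) : ℂ) * Complex.I by push_cast; ring]
    rw [Complex.norm_add_mul_I]
    congr 1; ring
  have hfnorm : ∀ k : ℤ, ‖f k‖
      = (t / Real.sqrt (t ^ 2 + 4 * Real.pi ^ 2 * (k : ℝ) ^ 2)) ^ p := by
    intro k
    rw [hf]
    simp only [norm_div, norm_pow, Complex.norm_real, Real.norm_eq_abs, habsw, abs_of_pos ht, div_pow]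
  have hq10 : 0 ≤ q1 := by positivity
  have hFle : ∀ k : ℤ, ‖F k‖ ≤ g k := by
    intro k
    by_cases hk : k = 0
    · simp [hF, hg, hk]
    · simp only [hF, hg, if_neg hk]
      rw [hfnorm]
      have hk1 : (1 : ℝ) ≤ (k : ℝ) ^ 2 := by
        have h1 : (1 : ℝ) ≤ |(k : ℝ)| := by
          rw [show |(k : ℝ)| = ((|k| : ℤ) : ℝ) by push_cast; ring]
          exact_mod_cast Int.one_le_abs hk
        nlinarith [abs_nonneg (k : ℝ), sq_abs (k : ℝ)]
      set u := Real.sqrt (t ^ 2 + 4 * Real.pi ^ 2 * (k : ℝ) ^ 2) with hu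
      have hu2 : u ^ 2 = t ^ 2 + 4 * Real.pi ^ 2 * (k : ℝ) ^ 2 := Real.sq_sqrt (by positivity)
      have hu0 : 0 < u := Real.sqrt_pos.mpr (by nlinarith)
      set v := Real.sqrt (t ^ 2 + 4 * Real.pi ^ 2) with hv
      have hv2 : v ^ 2 = t ^ 2 + 4 * Real.pi ^ 2 := Real.sq_sqrt (by positivity)
      have hv0 : 0 < v := Real.sqrt_pos.mpr (by positivity)
      have hvu : v ≤ u := Real.sqrt_le_sqrt (by nlinarith)
      have hsplit : (t / u) ^ p = (t / u) ^ (p - 2) * (t / u) ^ 2 := by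
        rw [← pow_add]; congr 1; omega
      rw [hsplit]
      have h1 : (t / u) ^ (p - 2) ≤ q1 ^ (p - 2) :=
        pow_le_pow_left₀ (by positivity) (div_le_div_of_nonneg_left ht.le hv0 hvu) _
      have h2 : (t / u) ^ 2 ≤ t ^ 2 / (4 * Real.pi ^ 2) * (1 / (k : ℝ) ^ 2) := by
        rw [div_pow, hu2]
        rw [show t ^ 2 / (4 * Real.pi ^ 2) * (1 / (k : ℝ) ^ 2)
            = t ^ 2 / (4 * Real.pi ^ 2 * (k : ℝ) ^ 2) by field_simp]
        exact div_le_div_of_nonneg_left (by positivity) (by positivity) (by nlinarith)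
      calc (t / u) ^ (p - 2) * (t / u) ^ 2
          ≤ q1 ^ (p - 2) * (t ^ 2 / (4 * Real.pi ^ 2) * (1 / (k : ℝ) ^ 2)) :=
            mul_le_mul h1 h2 (by positivity) (by positivity)
        _ = q1 ^ (p - 2) * (t ^ 2 / (4 * Real.pi ^ 2)) * (1 / (k : ℝ) ^ 2) := by ring
  have hgsum : Summable g := by
    have := (summable_one_div_int_pow.mpr one_lt_two).mul_left
      (q1 ^ (p - 2) * (t ^ 2 / (4 * Real.pi ^ 2)))
    exact this.congr (fun k => by simp [hg])
  have hFnormsum : Summable (fun k => ‖F k‖) := by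
    apply Summable.of_nonneg_of_le (fun k => norm_nonneg _) _ hgsum
    intro k
    exact hFle k
  have hFsum : Summable F := hFnormsum.of_norm
  have hf0 : f 0 = 1 := by
    rw [hf]
    simp only [Int.cast_zero, mul_zero, zero_add]
    exact div_self (pow_ne_zero _ (by exact_mod_cast ht.ne'))
  have hindsum : Summable (fun k : ℤ => if k = 0 then (1 : ℂ) else 0) :=
    summable_of_ne_finset_zero (s := {0}) (fun k hk => by simp at hk; simp [hk])
  have htsum : (∑' k, f k) = (∑' k, F k) + 1 := by
    rw [tsum_congr (f := f) (g := fun k => F k + (if k = 0 then (1 : ℂ) else 0))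
      (fun k => by by_cases hk : k = 0 <;> simp [hF, hk, hf0])]
    rw [Summable.tsum_add hFsum hindsum, tsum_ite_eq]
  rw [htsum, add_sub_cancel_right]
  calc ‖∑' k, F k‖ ≤ ∑' k, ‖F k‖ := by
        exact norm_tsum_le_tsum_norm hFnormsum
    _ ≤ ∑' k, g k := Summable.tsum_le_tsum hFle hFnormsum hgsum
    _ = q1 ^ (p - 2) * (t ^ 2 / (4 * Real.pi ^ 2)) * (∑' k : ℤ, 1 / (k : ℝ) ^ 2) := by
        rw [hg]
        exact tsum_mul_left

lemma aux_log_bound (δ ε x : ℝ) (hδ : 0 < δ) (hε : 0 < ε) (hx : 1 ≤ x) :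
    2 * Real.log x ≤ ε * x ^ δ + (4 / δ) ^ 2 / (4 * ε) := by
  have hx0 : 0 < x := lt_of_lt_of_le one_pos hx
  set u := x ^ (δ / 2) with hu
  have hu1 : 1 ≤ u := Real.one_le_rpow hx (by positivity)
  have hu0 : 0 < u := lt_of_lt_of_le one_pos hu1
  have hu2 : u ^ 2 = x ^ δ := by
    rw [hu, ← Real.rpow_natCast (x ^ (δ / 2)) 2, ← Real.rpow_mul hx0.le]
    norm_num
  have hlogu : Real.log u = δ / 2 * Real.log x := Real.log_rpow hx0 _
  have hloguu : Real.log u ≤ u := (Real.log_le_sub_one_of_pos hu0).trans (by linarith)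
  have hkey : (4 / δ) * u ≤ ε * u ^ 2 + (4 / δ) ^ 2 / (4 * ε) := by
    have h : ε * u ^ 2 + (4 / δ) ^ 2 / (4 * ε) - (4 / δ) * u
        = (2 * ε * u - 4 / δ) ^ 2 / (4 * ε) := by field_simp; ring
    nlinarith [div_nonneg (sq_nonneg (2 * ε * u - 4 / δ)) (by positivity : (0:ℝ) ≤ 4 * ε)]
  have h2 : 2 * Real.log x = (4 / δ) * Real.log u := by rw [hlogu]; field_simp; ring
  rw [h2, ← hu2]
  calc (4 / δ) * Real.log u ≤ (4 / δ) * u := by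
        apply mul_le_mul_of_nonneg_left hloguu (by positivity)
    _ ≤ ε * u ^ 2 + (4 / δ) ^ 2 / (4 * ε) := hkey

lemma aux_ineq1 (la P lr : ℝ) (h1 : la + -P ≤ lr) (hP1 : 1 ≤ P) (hla : la < 0) :
    -(2 * lr) ≤ 2 * (1 - la) * P := by nlinarith

lemma aux_ineq2 (t A P pi2 : ℝ) (ht0 : 0 ≤ t) (htle : t ≤ A * P) (hP1 : 1 ≤ P)
    (hpi : 0 ≤ pi2) : t ^ 2 + 4 * pi2 ≤ (A ^ 2 + 4 * pi2) * P ^ 2 := by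
  nlinarith [pow_le_pow_left₀ ht0 htle 2, mul_nonneg hpi (sub_nonneg.mpr (one_le_pow₀ hP1 : (1:ℝ) ≤ P ^ 2))]

lemma aux_ineq3 (t A P q : ℝ) (ht0 : 0 ≤ t) (htle : t ≤ A * P) (hP2 : P ^ 2 ≤ q) :
    t ^ 2 ≤ A ^ 2 * q := by
  nlinarith [pow_le_pow_left₀ ht0 htle 2, sq_nonneg A]

set_option maxHeartbeats 1000000 in
/-- for 0 < a < 1 and 0 < γ < 1/2, there is c > 0 with
sup_{a e^{−p^γ} ≤ |z| < 1} |B_p(z) − (p−1)/(2π)| = O(exp(−c p^{1−2γ})). -/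
theorem bergman_density_exp_decay_shrinking (a γ : ℝ) (ha0 : 0 < a) (ha1 : a < 1)
    (hγ0 : 0 < γ) (hγ1 : γ < 1 / 2) :
    ∃ c > (0 : ℝ), ∃ C : ℝ, ∀ p : ℕ, 2 ≤ p → ∀ z : ℂ,
      a * Real.exp (-((p : ℝ) ^ γ)) ≤ ‖z‖ → ‖z‖ < 1 →
      ‖
        ((((p : ℂ) - 1) / (2 * Real.pi))
            * (∑' k : ℤ, ((|Real.log (‖z‖ ^ 2)| : ℝ) : ℂ) ^ p
                / (2 * Real.pi * Complex.I * (k : ℂ)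
                    + ((|Real.log (‖z‖ ^ 2)| : ℝ) : ℂ)) ^ p)
          - ((p : ℂ) - 1) / (2 * Real.pi))‖
        ≤ C * Real.exp (-c * (p : ℝ) ^ (1 - 2 * γ)) := by
  have hπ := Real.pi_pos
  set δ := 1 - 2 * γ with hδdef
  clear_value δ
  have hδ : 0 < δ := by rw [hδdef]; linarith
  have hloga : Real.log a < 0 := Real.log_neg ha0 ha1
  set A := 2 * (1 - Real.log a) with hAdef
  clear_value A
  have hA : 2 ≤ A := by rw [hAdef]; linarith
  have hA0 : 0 < A := lt_of_lt_of_le two_pos hA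
  set K := A ^ 2 + 4 * Real.pi ^ 2 with hKdef
  clear_value K
  have hK : 0 < K := by rw [hKdef]; positivity
  set c := Real.pi ^ 2 / K with hcdef
  clear_value c
  have hc : 0 < c := by rw [hcdef]; positivity
  have hS0 : 0 ≤ ∑' k : ℤ, 1 / (k : ℝ) ^ 2 := tsum_nonneg (fun k => by positivity)
  refine ⟨c, hc, Real.exp 1 * A ^ 2 * (∑' k : ℤ, 1 / (k : ℝ) ^ 2) / (8 * Real.pi ^ 3)
      * Real.exp ((4 / δ) ^ 2 / (4 * c)), ?_⟩
  intro p hp z hz1 hz2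
  have hp1 : (1 : ℝ) ≤ (p : ℝ) := by exact_mod_cast Nat.one_le_of_lt hp
  have hp0 : (0 : ℝ) < (p : ℝ) := by linarith
  set r := ‖z‖ with hrdef
  have hr0 : 0 < r := lt_of_lt_of_le (by positivity) hz1
  have hr1 : r < 1 := hz2
  set t := |Real.log (r ^ 2)| with htdef
  have hlogr2 : Real.log (r ^ 2) < 0 :=
    Real.log_neg (by positivity) (pow_lt_one₀ hr0.le hr1 (by norm_num))
  have ht : t = -Real.log (r ^ 2) := abs_of_neg hlogr2
  have ht0 : 0 < t := by rw [ht]; linarith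
  set P := (p : ℝ) ^ γ with hPdef
  clear_value P
  have hP1 : 1 ≤ P := by rw [hPdef]; exact Real.one_le_rpow hp1 hγ0.le
  have hP0 : 0 < P := lt_of_lt_of_le one_pos hP1
  have htle : t ≤ A * P := by
    have h1 : Real.log (a * Real.exp (-P)) ≤ Real.log r := Real.log_le_log (by positivity) hz1
    rw [Real.log_mul (ne_of_gt ha0) (Real.exp_ne_zero _), Real.log_exp] at h1
    have h2 : Real.log (r ^ 2) = 2 * Real.log r := by
      rw [Real.log_pow]; push_cast; ring
    rw [ht, h2, hAdef]
    exact aux_ineq1 _ _ _ h1 hP1 hloga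
  -- abbreviations
  set q1 := t / Real.sqrt (t ^ 2 + 4 * Real.pi ^ 2) with hq1def
  set s := 2 * Real.pi ^ 2 / (t ^ 2 + 4 * Real.pi ^ 2) with hsdef
  have hden : (0 : ℝ) < t ^ 2 + 4 * Real.pi ^ 2 := by positivity
  have hs0 : 0 < s := by rw [hsdef]; positivity
  have hshalf : s ≤ 1 / 2 := by
    rw [hsdef, div_le_iff₀ hden]; linarith [sq_nonneg t]
  -- q1 ≤ exp (-s)
  have hq1exp : q1 ≤ Real.exp (-s) := by
    have hv2 : (Real.sqrt (t ^ 2 + 4 * Real.pi ^ 2)) ^ 2 = t ^ 2 + 4 * Real.pi ^ 2 :=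
      Real.sq_sqrt hden.le
    have hv0 : 0 < Real.sqrt (t ^ 2 + 4 * Real.pi ^ 2) := Real.sqrt_pos.mpr hden
    have hq1sq : q1 ^ 2 = 1 - 2 * s := by
      rw [hq1def, hsdef, div_pow, hv2]; field_simp; ring
    have hq10 : 0 ≤ q1 := by rw [hq1def]; positivity
    have h1s : 0 ≤ 1 - s := by linarith
    have hsq : q1 ^ 2 ≤ (1 - s) ^ 2 := by
      have hdiff : (1 - s) ^ 2 - q1 ^ 2 = s ^ 2 := by rw [hq1sq]; ring
      linarith [sq_nonneg s]
    have h := Real.sqrt_le_sqrt hsq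
    rw [Real.sqrt_sq hq10, Real.sqrt_sq h1s] at h
    calc q1 ≤ 1 - s := h
      _ ≤ Real.exp (-s) := by linarith [Real.add_one_le_exp (-s)]
  have hq10 : 0 ≤ q1 := by rw [hq1def]; positivity
  clear_value q1
  clear_value s
  -- q1 ^ (p-2) ≤ e * exp (-p * s)
  have hq1pow : q1 ^ (p - 2) ≤ Real.exp 1 * Real.exp (-(p : ℝ) * s) := by
    have h1 : q1 ^ (p - 2) ≤ Real.exp (-s) ^ (p - 2) :=
      pow_le_pow_left₀ hq10 hq1exp _
    have h2 : Real.exp (-s) ^ (p - 2) = Real.exp (((p - 2 : ℕ) : ℝ) * (-s)) :=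
      (Real.exp_nat_mul _ _).symm
    have h3 : ((p - 2 : ℕ) : ℝ) = (p : ℝ) - 2 := by
      have := Nat.cast_sub (R := ℝ) hp; push_cast at this ⊢; linarith [this]
    rw [h2, h3] at h1
    calc q1 ^ (p - 2) ≤ Real.exp (((p : ℝ) - 2) * (-s)) := h1
      _ ≤ Real.exp (1 + (-(p : ℝ) * s)) := by
          apply Real.exp_le_exp.mpr
          have hexpand : ((p : ℝ) - 2) * (-s) = -(p : ℝ) * s + 2 * s := by ring
          rw [hexpand]; linarith
      _ = Real.exp 1 * Real.exp (-(p : ℝ) * s) := Real.exp_add _ _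
  -- p * s ≥ 2 c p^δ
  have hPp : (p : ℝ) ^ δ * P ^ 2 = (p : ℝ) := by
    rw [hPdef, ← Real.rpow_natCast ((p : ℝ) ^ γ) 2, ← Real.rpow_mul hp0.le,
      ← Real.rpow_add hp0, hδdef, show 1 - 2 * γ + γ * ((2:ℕ):ℝ) = (1:ℝ) by push_cast; ring, Real.rpow_one]
  have hdenle : t ^ 2 + 4 * Real.pi ^ 2 ≤ K * P ^ 2 := by
    rw [hKdef]
    exact aux_ineq2 t A P (Real.pi ^ 2) ht0.le htle hP1 (sq_nonneg Real.pi)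
  have hps : 2 * c * (p : ℝ) ^ δ ≤ (p : ℝ) * s := by
    have h1 : 2 * Real.pi ^ 2 / (K * P ^ 2) ≤ s := by
      rw [hsdef]
      exact div_le_div_of_nonneg_left (by positivity) hden hdenle
    have h2 : (p : ℝ) * (2 * Real.pi ^ 2 / (K * P ^ 2)) = 2 * c * (p : ℝ) ^ δ := by
      conv_lhs => rw [← hPp]
      rw [hcdef]
      field_simp
    have h3 := mul_le_mul_of_nonneg_left h1 hp0.le
    linarith [h3, h2.ge, h2.le]
  have hexp2c : Real.exp (-(p : ℝ) * s) ≤ Real.exp (-(2 * c) * (p : ℝ) ^ δ) := by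
    apply Real.exp_le_exp.mpr
    have : -(2 * c) * (p : ℝ) ^ δ = -(2 * c * (p : ℝ) ^ δ) := by ring
    rw [this]; linarith
  -- rearrange the goal
  have hfactor : (((p : ℂ) - 1) / (2 * (Real.pi : ℂ)))
        * (∑' k : ℤ, ((t : ℝ) : ℂ) ^ p
            / (2 * Real.pi * Complex.I * (k : ℂ) + ((t : ℝ) : ℂ)) ^ p)
      - ((p : ℂ) - 1) / (2 * (Real.pi : ℂ))
      = (((p : ℂ) - 1) / (2 * (Real.pi : ℂ)))
        * ((∑' k : ℤ, ((t : ℝ) : ℂ) ^ p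
            / (2 * Real.pi * Complex.I * (k : ℂ) + ((t : ℝ) : ℂ)) ^ p) - 1) := by
    ring
  rw [hfactor, norm_mul]
  have hE : ‖((p : ℂ) - 1) / (2 * (Real.pi : ℂ))‖ = ((p : ℝ) - 1) / (2 * Real.pi) := by
    rw [show ((p : ℂ) - 1) = (((p : ℝ) - 1 : ℝ) : ℂ) by push_cast; ring,
      show (2 * (Real.pi : ℂ)) = ((2 * Real.pi : ℝ) : ℂ) by push_cast; ring,
      norm_div, Complex.norm_real, Complex.norm_real, Real.norm_eq_abs, Real.norm_eq_abs,
      abs_of_nonneg (by linarith : (0 : ℝ) ≤ (p : ℝ) - 1), abs_of_nonneg (by positivity)]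
  rw [hE]
  have hP2p : P ^ 2 ≤ (p : ℝ) := by
    rw [hPdef, ← Real.rpow_natCast ((p : ℝ) ^ γ) 2, ← Real.rpow_mul hp0.le]
    calc (p : ℝ) ^ (γ * 2) ≤ (p : ℝ) ^ (1 : ℝ) :=
          Real.rpow_le_rpow_of_exponent_le hp1 (by linarith)
      _ = (p : ℝ) := Real.rpow_one _
  have hlogp : 2 * Real.log (p : ℝ) ≤ c * (p : ℝ) ^ δ + (4 / δ) ^ 2 / (4 * c) :=
    aux_log_bound δ c (p : ℝ) hδ hc hp1
  have hp2exp : (p : ℝ) ^ 2 * Real.exp (-(2 * c) * (p : ℝ) ^ δ)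
      ≤ Real.exp ((4 / δ) ^ 2 / (4 * c)) * Real.exp (-c * (p : ℝ) ^ δ) := by
    have hpsq : (p : ℝ) ^ 2 = Real.exp (2 * Real.log (p : ℝ)) := by
      rw [show (2 : ℝ) * Real.log (p : ℝ) = Real.log ((p : ℝ) ^ 2) by
            rw [Real.log_pow]; push_cast; ring,
        Real.exp_log (by positivity)]
    rw [hpsq, ← Real.exp_add, ← Real.exp_add]
    apply Real.exp_le_exp.mpr
    have h1 : -(2 * c) * (p : ℝ) ^ δ = -(c * (p : ℝ) ^ δ) + -(c * (p : ℝ) ^ δ) := by ring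
    have h2 : -c * (p : ℝ) ^ δ = -(c * (p : ℝ) ^ δ) := by ring
    rw [h1, h2]; linarith
  have htsq : t ^ 2 ≤ A ^ 2 * (p : ℝ) := aux_ineq3 t A P (p : ℝ) ht0.le htle hP2p
  have hq1b : q1 ^ (p - 2) ≤ Real.exp 1 * Real.exp (-(2 * c) * (p : ℝ) ^ δ) :=
    hq1pow.trans (mul_le_mul_of_nonneg_left hexp2c (Real.exp_pos 1).le)
  calc ((p : ℝ) - 1) / (2 * Real.pi)
        * ‖(∑' k : ℤ, ((t : ℝ) : ℂ) ^ p
            / (2 * Real.pi * Complex.I * (k : ℂ) + ((t : ℝ) : ℂ)) ^ p) - 1‖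
      ≤ ((p : ℝ) - 1) / (2 * Real.pi)
        * (q1 ^ (p - 2) * (t ^ 2 / (4 * Real.pi ^ 2)) * (∑' k : ℤ, 1 / (k : ℝ) ^ 2)) := by
        rw [hq1def]
        exact mul_le_mul_of_nonneg_left (aux_tsum_bound t ht0 p hp)
          (div_nonneg (by linarith) (by positivity))
    _ ≤ (p : ℝ) / (2 * Real.pi)
        * ((Real.exp 1 * Real.exp (-(2 * c) * (p : ℝ) ^ δ))
            * ((A ^ 2 * (p : ℝ)) / (4 * Real.pi ^ 2)) * (∑' k : ℤ, 1 / (k : ℝ) ^ 2)) := by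
        gcongr <;> first
          | positivity
          | linarith
    _ = (Real.exp 1 * A ^ 2 * (∑' k : ℤ, 1 / (k : ℝ) ^ 2) / (8 * Real.pi ^ 3))
        * ((p : ℝ) ^ 2 * Real.exp (-(2 * c) * (p : ℝ) ^ δ)) := by ring
    _ ≤ (Real.exp 1 * A ^ 2 * (∑' k : ℤ, 1 / (k : ℝ) ^ 2) / (8 * Real.pi ^ 3))
        * (Real.exp ((4 / δ) ^ 2 / (4 * c)) * Real.exp (-c * (p : ℝ) ^ δ)) := by
        apply mul_le_mul_of_nonneg_left hp2exp
        positivity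
    _ = (Real.exp 1 * A ^ 2 * (∑' k : ℤ, 1 / (k : ℝ) ^ 2) / (8 * Real.pi ^ 3)
        * Real.exp ((4 / δ) ^ 2 / (4 * c))) * Real.exp (-c * (p : ℝ) ^ δ) := by ring
end

section
/- Let ψ_p(ζ) = exp(p(1 − ζ + log ζ)) for ζ > 0, G₀(η) = exp(−η²/2) and G₁(η) = η³ exp(−η²/2). There exists a constant C such that for all ζ > 0 and all p ≥ 1: |ψ_p(ζ) − G₀(√p(1−ζ)) + (1/(3√p)) G₁(√p(1−ζ))| ≤ C / (p(1 + p(1−ζ)²)). -/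
lemma poly_exp_le (n : ℕ) (d t : ℝ) (hd : 0 < d) (ht : 0 ≤ t) :
    t ^ n * Real.exp (-(t / d)) ≤ n.factorial * d ^ n := by
  have hfac : (0:ℝ) < n.factorial := by exact_mod_cast n.factorial_pos
  have h1 : (t / d) ^ n / n.factorial ≤ Real.exp (t / d) := by
    calc (t / d) ^ n / n.factorial
        ≤ ∑ i ∈ Finset.range (n + 1), (t / d) ^ i / i.factorial := by
          refine Finset.single_le_sum (f := fun i => (t / d) ^ i / (i.factorial : ℝ))
            (fun i _ => by positivity) (Finset.self_mem_range_succ n)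
      _ ≤ Real.exp (t / d) := Real.sum_le_exp_of_nonneg (by positivity) _
  have h2 : (t / d) ^ n * Real.exp (-(t / d)) ≤ n.factorial := by
    have hE := Real.exp_pos (t / d)
    have := (div_le_iff₀ hfac).mp h1
    calc (t / d) ^ n * Real.exp (-(t / d))
        ≤ (n.factorial * Real.exp (t / d)) * Real.exp (-(t / d)) :=
          mul_le_mul_of_nonneg_right (by linarith) (Real.exp_nonneg _)
      _ = n.factorial := by rw [mul_assoc, ← Real.exp_add]; simp
  have h3 : t ^ n * Real.exp (-(t / d)) = d ^ n * ((t / d) ^ n * Real.exp (-(t / d))) := by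
    field_simp
    rw [div_pow]; field_simp [hd.ne']
  rw [h3]
  calc d ^ n * ((t / d) ^ n * Real.exp (-(t / d))) ≤ d ^ n * n.factorial :=
        mul_le_mul_of_nonneg_left h2 (by positivity)
    _ = n.factorial * d ^ n := by ring

lemma log_le_quad {z : ℝ} (h0 : 0 < z) (h1 : z ≤ 1) :
    Real.log z ≤ z - 1 - (1 - z) ^ 2 / 2 := by
  set g : ℝ → ℝ := fun t => t - 1 - (1 - t) ^ 2 / 2 - Real.log t with hg
  have hd : ∀ t : ℝ, 0 < t → HasDerivAt g (2 - t - 1 / t) t := by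
    intro t ht
    have A : HasDerivAt (fun x : ℝ => 1 - x) (-1) t := by
      simpa using (hasDerivAt_id' t).const_sub (1:ℝ)
    have B : HasDerivAt (fun x : ℝ => (1 - x) ^ 2) (2 * (1 - t) ^ 1 * (-1)) t := by
      simpa using A.fun_pow 2
    have C := ((hasDerivAt_id t).sub_const 1).fun_sub (B.div_const 2)
    have D := C.fun_sub (Real.hasDerivAt_log ht.ne')
    refine D.congr_deriv ?_
    field_simp
    ring
  have hanti : AntitoneOn g (Set.Icc z 1) := by
    apply antitoneOn_of_deriv_nonpos (convex_Icc z 1)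
    · intro t htI
      exact (hd t (lt_of_lt_of_le h0 htI.1)).continuousAt.continuousWithinAt
    · intro t htI
      rw [interior_Icc] at htI
      exact (hd t (lt_of_lt_of_le h0 htI.1.le)).differentiableAt.differentiableWithinAt
    · intro t htI
      rw [interior_Icc] at htI
      have ht : 0 < t := lt_of_lt_of_le h0 htI.1.le
      rw [(hd t ht).deriv]
      have : 2 - t - 1 / t = -((t - 1) ^ 2) / t := by field_simp; ring
      rw [this]
      apply div_nonpos_of_nonpos_of_nonneg (by nlinarith) ht.le
  have h := hanti (Set.left_mem_Icc.mpr h1) (Set.right_mem_Icc.mpr h1) h1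
  have hg1 : g 1 = 0 := by simp [hg]
  rw [hg1] at h
  have : 0 ≤ z - 1 - (1 - z) ^ 2 / 2 - Real.log z := h
  linarith

lemma log_le_sinh {z : ℝ} (h1 : 1 ≤ z) : Real.log z ≤ (z - z⁻¹) / 2 := by
  have h := Real.self_le_sinh_iff.mpr (Real.log_nonneg h1)
  rwa [Real.sinh_log (by linarith)] at h

lemma f_upper {z : ℝ} (h0 : 0 < z) :
    1 - z + Real.log z ≤ -((1 - z) ^ 2 / (2 * (1 + |1 - z|))) := by
  rcases le_or_gt z 1 with h1 | h1
  · have hq := log_le_quad h0 h1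
    have hx : |1 - z| = 1 - z := abs_of_nonneg (by linarith)
    rw [hx]
    have hpos : (0:ℝ) < 2 * (1 + (1 - z)) := by linarith
    rw [neg_div', le_div_iff₀ hpos]
    nlinarith [sq_nonneg (1 - z)]
  · have hq := log_le_sinh h1.le
    have hx : |1 - z| = z - 1 := by rw [abs_of_nonpos (by linarith)]; ring
    rw [hx]
    have h2 : 1 - z + Real.log z ≤ 1 - z + (z - z⁻¹) / 2 := by linarith
    refine h2.trans ?_
    have hzne : z ≠ 0 := by linarith
    have : 1 - z + (z - z⁻¹) / 2 = -((1 - z) ^ 2 / (2 * (1 + (z - 1)))) := by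
      field_simp
      ring
    rw [this]

set_option maxHeartbeats 2000000 in
/-- uniform Gaussian approximation of ψ_p(ζ) = e^{p(1−ζ+log ζ)}:
|ψ_p(ζ) − G₀(√p(1−ζ)) + (1/(3√p)) G₁(√p(1−ζ))| ≤ C/(p(1+p(1−ζ)²)). -/
theorem psi_gaussian_approx :
    ∃ C : ℝ, ∀ p : ℕ, 1 ≤ p → ∀ ζ : ℝ, 0 < ζ →
      |Real.exp (p * (1 - ζ + Real.log ζ))
          - Real.exp (-(Real.sqrt p * (1 - ζ)) ^ 2 / 2)
          + (1 / (3 * Real.sqrt p))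
              * ((Real.sqrt p * (1 - ζ)) ^ 3
                * Real.exp (-(Real.sqrt p * (1 - ζ)) ^ 2 / 2))|
        ≤ C / (p * (1 + p * (1 - ζ) ^ 2)) := by
  refine ⟨1000000000, fun p hp ζ hζ => ?_⟩
  have hf0 := f_upper hζ
  set q : ℝ := (p : ℝ) with hqdef
  have hq1 : (1 : ℝ) ≤ q := by rw [hqdef]; exact_mod_cast hp
  have hq0 : (0 : ℝ) < q := by linarith
  set u : ℝ := 1 - ζ with hudef
  set x : ℝ := |u| with hxdef
  have hx0 : 0 ≤ x := abs_nonneg u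
  have hx2 : x ^ 2 = u ^ 2 := sq_abs u
  have hζu : (1:ℝ) - u = ζ := by rw [hudef]; ring
  have hsq : Real.sqrt q ^ 2 = q := Real.sq_sqrt hq0.le
  have hs1 : (1 : ℝ) ≤ Real.sqrt q := by
    rw [show (1:ℝ) = Real.sqrt 1 by simp]
    exact Real.sqrt_le_sqrt hq1
  set w : ℝ := q * u ^ 2 with hwdef
  have hw0 : 0 ≤ w := by positivity
  have hwx : w = q * x ^ 2 := by rw [hwdef, hx2]
  have hkey : -(Real.sqrt q * u) ^ 2 / 2 = -(w / 2) := by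
    rw [mul_pow, hsq]; ring
  have hG1 : (1 / (3 * Real.sqrt q)) * ((Real.sqrt q * u) ^ 3 * Real.exp (-(w / 2)))
      = (q * u ^ 3 / 3) * Real.exp (-(w / 2)) := by
    have hsne : Real.sqrt q ≠ 0 := by positivity
    have h3 : Real.sqrt q ^ 3 = q * Real.sqrt q := by
      rw [pow_succ, hsq]
    rw [mul_pow, h3]
    field_simp
  rw [hkey, hG1]
  have hden : (0 : ℝ) < q * (1 + w) := by positivity
  rw [show q * (1 + q * u ^ 2) = q * (1 + w) from rfl, le_div_iff₀ hden]
  -- rewrite the f-bound in terms of u, x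
  have hf : u + Real.log ζ ≤ -(x ^ 2 / (2 * (1 + x))) := by
    rw [← hx2] at hf0
    exact hf0
  clear_value q u x w
  by_cases hA : x ≤ 1 / 2 ∧ q * x ^ 3 ≤ 1 / 2
  · -- Taylor region
    obtain ⟨hxh, hqx3⟩ := hA
    have hx1 : |u| < 1 := by rw [← hxdef]; linarith
    have h2 := Real.abs_log_sub_add_sum_range_le hx1 2
    have h3 := Real.abs_log_sub_add_sum_range_le hx1 3
    simp [Finset.sum_range_succ] at h2 h3
    norm_num at h2 h3
    rw [hζu] at h2 h3
    rw [← hxdef] at h2 h3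
    have hxpos : (0:ℝ) < 1 - x := by linarith
    have hb2 : |u + u ^ 2 / 2 + Real.log ζ| ≤ 2 * x ^ 3 := by
      refine h2.trans ?_
      rw [div_le_iff₀ hxpos]
      nlinarith [pow_nonneg hx0 3]
    have hb3 : |u + u ^ 2 / 2 + u ^ 3 / 3 + Real.log ζ| ≤ 2 * x ^ 4 := by
      refine h3.trans ?_
      rw [div_le_iff₀ hxpos]
      nlinarith [pow_nonneg hx0 4]
    set r : ℝ := u + u ^ 2 / 2 + Real.log ζ with hrdef
    set s : ℝ := q * r with hsdef
    clear_value r s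
    have hs_abs : |s| ≤ 2 * q * x ^ 3 := by
      rw [hsdef, abs_mul, abs_of_pos hq0]
      calc q * |r| ≤ q * (2 * x ^ 3) := mul_le_mul_of_nonneg_left hb2 hq0.le
        _ = 2 * q * x ^ 3 := by ring
    have hs_le1 : |s| ≤ 1 := hs_abs.trans (by linarith)
    have hexp := Real.abs_exp_sub_one_sub_id_le hs_le1
    have harg : q * (u + Real.log ζ) = -(w / 2) + s := by
      rw [hsdef, hrdef, hwdef]; ring
    rw [harg, Real.exp_add]
    have hfactor : Real.exp (-(w/2)) * Real.exp s - Real.exp (-(w/2))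
        + q * u ^ 3 / 3 * Real.exp (-(w/2))
        = Real.exp (-(w/2)) * (Real.exp s - 1 + q * (r + u ^ 3 / 3) - s) := by
      rw [hsdef]; ring
    rw [hfactor, abs_mul, abs_of_pos (Real.exp_pos _)]
    have hsplit : |Real.exp s - 1 + q * (r + u ^ 3 / 3) - s| ≤ s ^ 2 + 2 * q * x ^ 4 := by
      have htri : Real.exp s - 1 + q * (r + u ^ 3 / 3) - s
          = (Real.exp s - 1 - s) + q * (r + u ^ 3 / 3) := by ring
      rw [htri]
      refine (abs_add_le _ _).trans (add_le_add hexp ?_)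
      rw [abs_mul, abs_of_pos hq0]
      have hre : r + u ^ 3 / 3 = u + u ^ 2 / 2 + u ^ 3 / 3 + Real.log ζ := by
        rw [hrdef]; ring
      rw [hre]
      calc q * |u + u ^ 2 / 2 + u ^ 3 / 3 + Real.log ζ| ≤ q * (2 * x ^ 4) :=
            mul_le_mul_of_nonneg_left hb3 hq0.le
        _ = 2 * q * x ^ 4 := by ring
    have hs2 : s ^ 2 ≤ 4 * q ^ 2 * x ^ 6 := by
      have h1 := pow_le_pow_left₀ (abs_nonneg s) hs_abs 2
      rw [sq_abs] at h1
      calc s ^ 2 ≤ (2 * q * x ^ 3) ^ 2 := h1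
        _ = 4 * q ^ 2 * x ^ 6 := by ring
    calc Real.exp (-(w/2)) * |Real.exp s - 1 + q * (r + u ^ 3 / 3) - s| * (q * (1 + w))
        ≤ Real.exp (-(w/2)) * (4 * q ^ 2 * x ^ 6 + 2 * q * x ^ 4) * (q * (1 + w)) := by
          apply mul_le_mul_of_nonneg_right _ hden.le
          apply mul_le_mul_of_nonneg_left _ (Real.exp_nonneg _)
          exact hsplit.trans (by linarith)
      _ = Real.exp (-(w/2)) * ((4 * w ^ 3 + 2 * w ^ 2) * (1 + w)) := by
          rw [hwx]; ring
      _ ≤ 1000000000 := by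
          have p2 := poly_exp_le 2 2 w (by norm_num) hw0
          have p3 := poly_exp_le 3 2 w (by norm_num) hw0
          have p4 := poly_exp_le 4 2 w (by norm_num) hw0
          norm_num [Nat.factorial] at p2 p3 p4
          nlinarith [Real.exp_pos (-(w/2)), hw0]
  · -- decay region
    rw [not_and_or] at hA
    push_neg at hA
    have htri : |Real.exp (q * (u + Real.log ζ)) - Real.exp (-(w/2))
        + q * u ^ 3 / 3 * Real.exp (-(w/2))|
        ≤ Real.exp (q * (u + Real.log ζ)) + Real.exp (-(w/2))
          + q * x ^ 3 / 3 * Real.exp (-(w/2)) := by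
      have h1 : |Real.exp (q * (u + Real.log ζ)) - Real.exp (-(w/2))
          + q * u ^ 3 / 3 * Real.exp (-(w/2))|
          ≤ |Real.exp (q * (u + Real.log ζ)) - Real.exp (-(w/2))|
            + |q * u ^ 3 / 3 * Real.exp (-(w/2))| := abs_add_le _ _
      have h2 : |Real.exp (q * (u + Real.log ζ)) - Real.exp (-(w/2))|
          ≤ |Real.exp (q * (u + Real.log ζ))| + |Real.exp (-(w/2))| := abs_sub _ _
      have h3 : |q * u ^ 3 / 3 * Real.exp (-(w/2))| = q * x ^ 3 / 3 * Real.exp (-(w/2)) := by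
        rw [abs_mul, abs_of_pos (Real.exp_pos _), abs_div, abs_mul, abs_pow,
          abs_of_pos hq0, ← hxdef]
        norm_num
      rw [abs_of_pos (Real.exp_pos _), abs_of_pos (Real.exp_pos _)] at h2
      rw [h3] at h1
      linarith
    refine le_trans (mul_le_mul_of_nonneg_right htri hden.le) ?_
    have hexpand : (Real.exp (q * (u + Real.log ζ)) + Real.exp (-(w/2))
          + q * x ^ 3 / 3 * Real.exp (-(w/2))) * (q * (1 + w))
        = Real.exp (q * (u + Real.log ζ)) * (q * (1 + w))
          + Real.exp (-(w/2)) * (q * (1 + w))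
          + (q * x ^ 3 / 3) * Real.exp (-(w/2)) * (q * (1 + w)) := by ring
    rw [hexpand]
    rcases le_or_gt x (1/2) with hx12 | hx12
    · -- subcase: x small, q x^3 large
      have hqx3 : 1/2 < q * x ^ 3 := by
        rcases hA with h | h
        · linarith
        · exact h
      have hxne : x ≠ 0 := by
        rintro h
        rw [h] at hqx3
        norm_num at hqx3
      have hxpos : 0 < x := hx0.lt_of_ne (Ne.symm hxne)
      have hwx3 : q * x ^ 3 = w * x := by rw [hwx]; ring
      have hw1 : 1 ≤ w := by
        have h2 : w * x ≤ w * (1/2) := mul_le_mul_of_nonneg_left hx12 hw0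
        rw [hwx3] at hqx3
        linarith
      have hqx30 : (0:ℝ) ≤ q * x ^ 3 := by positivity
      have h14 : 1/4 ≤ (q * x ^ 3) ^ 2 := by
        have h := mul_le_mul hqx3.le hqx3.le (by norm_num) hqx30
        have h2 : (q * x ^ 3) ^ 2 = (q * x ^ 3) * (q * x ^ 3) := sq (q * x ^ 3)
        linarith
      have hw3q : q ≤ 4 * w ^ 3 := by
        have hwq : w ^ 3 = q * (q * x ^ 3) ^ 2 := by rw [hwx]; ring
        have h4 : q * (1/4) ≤ q * ((q * x ^ 3) ^ 2) := mul_le_mul_of_nonneg_left h14 hq0.le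
        rw [← hwq] at h4
        linarith
      have hq1w : q * (1 + w) ≤ 4 * w ^ 3 + 4 * w ^ 4 := by
        have h := mul_le_mul_of_nonneg_right hw3q (show (0:ℝ) ≤ 1 + w by linarith)
        have h2 : 4 * w ^ 3 * (1 + w) = 4 * w ^ 3 + 4 * w ^ 4 := by ring
        linarith
      have hfe : q * (u + Real.log ζ) ≤ -(w / 3) := by
        have hdd : x ^ 2 / 3 ≤ x ^ 2 / (2 * (1 + x)) := by
          rw [div_le_div_iff₀ (by norm_num) (by linarith)]
          nlinarith [mul_le_mul_of_nonneg_left hx12 (sq_nonneg x), sq_nonneg x]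
        calc q * (u + Real.log ζ) ≤ q * (-(x ^ 2 / (2 * (1 + x)))) :=
              mul_le_mul_of_nonneg_left hf hq0.le
          _ ≤ q * (-(x ^ 2 / 3)) := by
              apply mul_le_mul_of_nonneg_left _ hq0.le
              linarith
          _ = -(w / 3) := by rw [hwx]; ring
      have hT1 : Real.exp (q * (u + Real.log ζ)) * (q * (1 + w)) ≤ 333000000 := by
        calc Real.exp (q * (u + Real.log ζ)) * (q * (1 + w))
            ≤ Real.exp (-(w / 3)) * (4 * w ^ 3 + 4 * w ^ 4) := by
              apply mul_le_mul (Real.exp_le_exp.mpr hfe) hq1w hden.le (Real.exp_nonneg _)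
          _ ≤ 333000000 := by
              have p3 := poly_exp_le 3 3 w (by norm_num) hw0
              have p4 := poly_exp_le 4 3 w (by norm_num) hw0
              norm_num [Nat.factorial] at p3 p4
              nlinarith [Real.exp_pos (-(w/3))]
      have hT2 : Real.exp (-(w/2)) * (q * (1 + w)) ≤ 333000000 := by
        calc Real.exp (-(w/2)) * (q * (1 + w))
            ≤ Real.exp (-(w/2)) * (4 * w ^ 3 + 4 * w ^ 4) :=
              mul_le_mul_of_nonneg_left hq1w (Real.exp_nonneg _)
          _ ≤ 333000000 := by
              have p3 := poly_exp_le 3 2 w (by norm_num) hw0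
              have p4 := poly_exp_le 4 2 w (by norm_num) hw0
              norm_num [Nat.factorial] at p3 p4
              nlinarith [Real.exp_pos (-(w/2))]
      have hT3 : (q * x ^ 3 / 3) * Real.exp (-(w/2)) * (q * (1 + w)) ≤ 333000000 := by
        have hqx3w : q * x ^ 3 ≤ w / 2 := by
          rw [hwx3]
          have h2 : w * x ≤ w * (1/2) := mul_le_mul_of_nonneg_left hx12 hw0
          linarith
        calc (q * x ^ 3 / 3) * Real.exp (-(w/2)) * (q * (1 + w))
            ≤ (w / 6) * Real.exp (-(w/2)) * (4 * w ^ 3 + 4 * w ^ 4) := by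
              apply mul_le_mul _ hq1w hden.le
                (mul_nonneg (by linarith) (Real.exp_nonneg _))
              apply mul_le_mul_of_nonneg_right _ (Real.exp_nonneg _)
              linarith
          _ ≤ 333000000 := by
              have p4 := poly_exp_le 4 2 w (by norm_num) hw0
              have p5 := poly_exp_le 5 2 w (by norm_num) hw0
              norm_num [Nat.factorial] at p4 p5
              nlinarith [Real.exp_pos (-(w/2))]
      linarith
    · -- subcase: x large
      have hy0 : (0:ℝ) ≤ q * x := mul_nonneg hq0.le hx0
      have hq2y : q ≤ 2 * (q * x) := by
        have h := mul_le_mul_of_nonneg_left hx12.le hq0.le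
        linarith
      have hx14 : (1:ℝ)/4 ≤ x ^ 2 := by
        have h := mul_le_mul hx12.le hx12.le (by norm_num) hx0
        have h2 : x ^ 2 = x * x := sq x
        linarith
      have hw4q : q ≤ 4 * w := by
        rw [hwx]
        have h := mul_le_mul_of_nonneg_left hx14 hq0.le
        linarith
      have hq1w : q * (1 + w) ≤ 4 * w + 4 * w ^ 2 := by
        have h := mul_le_mul_of_nonneg_right hw4q (show (0:ℝ) ≤ 1 + w by linarith)
        have h2 : 4 * w * (1 + w) = 4 * w + 4 * w ^ 2 := by ring
        linarith
      have hqw : q * (1 + w) = q + (q * x) ^ 2 := by rw [hwx]; ring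
      have hfe : q * (u + Real.log ζ) ≤ -((q * x) / 6) := by
        have hdd : x / 6 ≤ x ^ 2 / (2 * (1 + x)) := by
          rw [div_le_div_iff₀ (by norm_num) (by linarith)]
          nlinarith [mul_le_mul_of_nonneg_left hx12.le hx0, hx0, hx14]
        calc q * (u + Real.log ζ) ≤ q * (-(x ^ 2 / (2 * (1 + x)))) :=
              mul_le_mul_of_nonneg_left hf hq0.le
          _ ≤ q * (-(x / 6)) := by
              apply mul_le_mul_of_nonneg_left _ hq0.le
              linarith
          _ = -((q * x) / 6) := by ring
      have hT1 : Real.exp (q * (u + Real.log ζ)) * (q * (1 + w)) ≤ 333000000 := by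
        calc Real.exp (q * (u + Real.log ζ)) * (q * (1 + w))
            ≤ Real.exp (-((q * x) / 6)) * (2 * (q * x) + (q * x) ^ 2) := by
              apply mul_le_mul (Real.exp_le_exp.mpr hfe) _ hden.le (Real.exp_nonneg _)
              rw [hqw]; linarith
          _ ≤ 333000000 := by
              have p1 := poly_exp_le 1 6 (q * x) (by norm_num) hy0
              have p2 := poly_exp_le 2 6 (q * x) (by norm_num) hy0
              norm_num [Nat.factorial] at p1 p2
              nlinarith [Real.exp_pos (-((q * x)/6))]
      have hT2 : Real.exp (-(w/2)) * (q * (1 + w)) ≤ 333000000 := by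
        calc Real.exp (-(w/2)) * (q * (1 + w))
            ≤ Real.exp (-(w/2)) * (4 * w + 4 * w ^ 2) :=
              mul_le_mul_of_nonneg_left hq1w (Real.exp_nonneg _)
          _ ≤ 333000000 := by
              have p1 := poly_exp_le 1 2 w (by norm_num) hw0
              have p2 := poly_exp_le 2 2 w (by norm_num) hw0
              norm_num [Nat.factorial] at p1 p2
              nlinarith [Real.exp_pos (-(w/2))]
      have hT3 : (q * x ^ 3 / 3) * Real.exp (-(w/2)) * (q * (1 + w)) ≤ 333000000 := by
        have hx1w : x ≤ 1 + w := by
          rw [hwx]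
          have e1 : 0 ≤ x ^ 2 - 2 * x + 1 := by nlinarith [sq_nonneg (x - 1)]
          have e2 : 1 * x ^ 2 ≤ q * x ^ 2 := mul_le_mul_of_nonneg_right hq1 (sq_nonneg x)
          linarith
        have hqx3w : q * x ^ 3 ≤ w * (1 + w) := by
          have : q * x ^ 3 = w * x := by rw [hwx]; ring
          rw [this]
          exact mul_le_mul_of_nonneg_left hx1w hw0
        calc (q * x ^ 3 / 3) * Real.exp (-(w/2)) * (q * (1 + w))
            ≤ (w * (1 + w) / 3) * Real.exp (-(w/2)) * (4 * w + 4 * w ^ 2) := by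
              apply mul_le_mul _ hq1w hden.le
                (mul_nonneg (by nlinarith) (Real.exp_nonneg _))
              apply mul_le_mul_of_nonneg_right _ (Real.exp_nonneg _)
              linarith
          _ ≤ 333000000 := by
              have p2 := poly_exp_le 2 2 w (by norm_num) hw0
              have p3 := poly_exp_le 3 2 w (by norm_num) hw0
              have p4 := poly_exp_le 4 2 w (by norm_num) hw0
              norm_num [Nat.factorial] at p2 p3 p4
              nlinarith [Real.exp_pos (-(w/2)), hw0]
      linarith
end

section
/- Let G₁(η) = η³ e^{−η²/2}. Then sup_{x∈(0,1)} |log x| · ∑_{ℓ=1}^∞ |G₁(√p(1 + ℓ log x))| = O(1) as p → ∞. -/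
open Real

lemma cube_le_six_exp {s : ℝ} (hs : 0 ≤ s) : s ^ 3 ≤ 6 * Real.exp s := by
  have h := Real.pow_div_factorial_le_exp s hs 3
  norm_num [Nat.factorial] at h
  linarith

lemma G1_term_bound {t u : ℝ} (ht : |u| ≤ |t|) :
    |t ^ 3 * Real.exp (-t ^ 2 / 2)| ≤ 6 * Real.exp (2 + u) := by
  rw [abs_mul, abs_pow, Real.abs_exp]
  have h1 : |t| ^ 3 ≤ 6 * Real.exp |t| := cube_le_six_exp (abs_nonneg t)
  have hexp : (0:ℝ) < Real.exp (-t ^ 2 / 2) := Real.exp_pos _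
  calc |t| ^ 3 * Real.exp (-t ^ 2 / 2)
      ≤ 6 * Real.exp |t| * Real.exp (-t ^ 2 / 2) := by
        apply mul_le_mul_of_nonneg_right h1 hexp.le
    _ = 6 * Real.exp (|t| + -t ^ 2 / 2) := by rw [mul_assoc, ← Real.exp_add]
    _ ≤ 6 * Real.exp (2 + u) := by
        have h5 : |t| + -t ^ 2 / 2 ≤ 2 + u := by
          have h2 : (0:ℝ) ≤ (|t| - 2) ^ 2 := sq_nonneg _
          have h3 : t ^ 2 = |t| ^ 2 := (sq_abs t).symm
          have h4 : -|t| ≤ u := le_trans (neg_le_neg ht) (neg_abs_le u)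
          nlinarith
        have := Real.exp_le_exp.mpr h5
        linarith

/-- sup_{x∈(0,1)} |log x| ∑_{ℓ≥1} |G₁(√p(1+ℓ log x))| = O(1). -/
theorem gaussian_G1_sum_bounded :
    ∃ C : ℝ, ∀ p : ℕ, 1 ≤ p → ∀ x : ℝ, 0 < x → x < 1 →
      |Real.log x|
          * ∑' ℓ : ℕ,
              |(Real.sqrt p * (1 + ((ℓ : ℝ) + 1) * Real.log x)) ^ 3
                * Real.exp (-(Real.sqrt p * (1 + ((ℓ : ℝ) + 1) * Real.log x)) ^ 2 / 2)|
        ≤ C := by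
  refine ⟨6 * Real.exp 3, ?_⟩
  intro p hp x hx0 hx1
  have hlog : Real.log x < 0 := Real.log_neg hx0 hx1
  have hsp : (1:ℝ) ≤ Real.sqrt p := by
    rw [show (1:ℝ) = Real.sqrt 1 by simp]
    exact Real.sqrt_le_sqrt (by exact_mod_cast hp)
  set f : ℕ → ℝ := fun ℓ =>
      |(Real.sqrt p * (1 + ((ℓ : ℝ) + 1) * Real.log x)) ^ 3
        * Real.exp (-(Real.sqrt p * (1 + ((ℓ : ℝ) + 1) * Real.log x)) ^ 2 / 2)| with hf
  set g : ℕ → ℝ := fun ℓ => 6 * Real.exp 3 * (x * x ^ ℓ) with hg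
  have hbound : ∀ ℓ : ℕ, f ℓ ≤ g ℓ := by
    intro ℓ
    have hu : |1 + ((ℓ : ℝ) + 1) * Real.log x|
        ≤ |Real.sqrt p * (1 + ((ℓ : ℝ) + 1) * Real.log x)| := by
      rw [abs_mul]
      nlinarith [abs_nonneg (1 + ((ℓ : ℝ) + 1) * Real.log x),
        abs_of_nonneg (le_trans zero_le_one hsp)]
    have hG := G1_term_bound hu
    refine hG.trans (le_of_eq ?_)
    rw [hg]
    have heq : (2:ℝ) + (1 + ((ℓ : ℝ) + 1) * Real.log x)
        = 3 + (((ℓ:ℕ)+1 : ℕ) : ℝ) * Real.log x := by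
      push_cast; ring
    rw [heq, Real.exp_add, Real.exp_nat_mul, Real.exp_log hx0]
    push_cast
    ring
  have hgsum : Summable g := by
    apply Summable.mul_left
    exact (summable_geometric_of_lt_one hx0.le hx1).mul_left x
  have hfsum : Summable f :=
    Summable.of_nonneg_of_le (fun ℓ => abs_nonneg _) hbound hgsum
  have htsum : ∑' ℓ, f ℓ ≤ ∑' ℓ, g ℓ := Summable.tsum_le_tsum hbound hfsum hgsum
  have hgval : ∑' ℓ, g ℓ = 6 * Real.exp 3 * (x * (1 - x)⁻¹) := by
    rw [hg, tsum_mul_left, tsum_mul_left, tsum_geometric_of_lt_one hx0.le hx1]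
  have habs : |Real.log x| = -Real.log x := abs_of_neg hlog
  have hxineq : -Real.log x * x ≤ 1 - x := by
    have h1 := Real.add_one_le_exp (-Real.log x)
    rw [Real.exp_neg, Real.exp_log hx0] at h1
    have h2 : -Real.log x ≤ x⁻¹ - 1 := by linarith
    nlinarith [mul_le_mul_of_nonneg_right h2 hx0.le, inv_mul_cancel₀ hx0.ne']
  have hxpos : 0 < 1 - x := by linarith
  calc |Real.log x| * ∑' ℓ, f ℓ ≤ (-Real.log x) * (6 * Real.exp 3 * (x * (1 - x)⁻¹)) := by
        rw [habs]
        apply mul_le_mul_of_nonneg_left (htsum.trans_eq hgval) (by linarith)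
    _ = 6 * Real.exp 3 * ((-Real.log x * x) * (1 - x)⁻¹) := by ring
    _ ≤ 6 * Real.exp 3 * ((1 - x) * (1 - x)⁻¹) := by
        have h6 : (0:ℝ) < 6 * Real.exp 3 := by positivity
        apply mul_le_mul_of_nonneg_left _ h6.le
        exact mul_le_mul_of_nonneg_right hxineq (inv_nonneg.mpr hxpos.le)
    _ = 6 * Real.exp 3 := by rw [mul_inv_cancel₀ hxpos.ne']; ring
end
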